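/- Suppose the augmented Arnoldi relation A [U W_j] = [C W_{j+1}] G̅_j holds with G̅_j = [[I, B_j],[0, H̄_j]], where W_{j+1} has orthonormal columns, C*C = I, C*W_{j+1} = 0, and W_j is the first jL columns of W_{j+1}. Let [W_{j+1} C U] = [W_{j+1} C Û] T be a QR-type factorization with T = [[I, 0, W_{j+1}*U],[0, I, C*U],[0, 0, N]] and Û having columns orthonormal and orthogonal to both W_{j+1} and C. Then for any σ ∈ ℂ, (A + σI)[W_j U] = [W_{j+1} C Û] G̅_j^{(σ)}, where G̅_j^{(σ)} = [[H̄_j^{(σ)}, σ W_{j+1}*U],[B_j, I + σ C*U],[0, σN]] and H̄_j^{(σ)} = H̄_j + σ[I_{jL}; 0_{L×jL}]. -/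

import Mathlib

open Matrix

/-- The shifted augmented Arnoldi relation:
`(A + σI)[W_j U] = [W_{j+1} C Û] G̅_j^{(σ)}`. -/
theorem shifted_augmented_arnoldi (n p L k : ℕ) (A : Matrix (Fin n) (Fin n) ℂ)
    (U C Uhat : Matrix (Fin n) (Fin k) ℂ)
    (W1 : Matrix (Fin n) (Fin p ⊕ Fin L) ℂ)
    (Wj : Matrix (Fin n) (Fin p) ℂ) (hWj : Wj = fun r q => W1 r (Sum.inl q))
    (H : Matrix (Fin p ⊕ Fin L) (Fin p) ℂ) (B : Matrix (Fin k) (Fin p) ℂ)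
    (N : Matrix (Fin k) (Fin k) ℂ)
    -- orthonormality assumptions
    (hCC : Cᴴ * C = 1) (hWW : W1ᴴ * W1 = 1) (hCW : Cᴴ * W1 = 0)
    (hUhat : Uhatᴴ * Uhat = 1) (hUhatW : W1ᴴ * Uhat = 0) (hUhatC : Cᴴ * Uhat = 0)
    -- the augmented Arnoldi relation A[U W_j] = [C W_{j+1}] [[I,B],[0,H̄]]
    (hC : A * U = C) (hB : B = Cᴴ * (A * Wj)) (hArnoldi : A * Wj = C * B + W1 * H)
    -- QR-type factorization of U against [W_{j+1} C Û]
    (hQR : U = W1 * (W1ᴴ * U) + C * (Cᴴ * U) + Uhat * N)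
    (σ : ℂ) :
    (A + σ • (1 : Matrix (Fin n) (Fin n) ℂ)) *
        (Matrix.of fun r c => Sum.elim (fun q => Wj r q) (fun a => U r a) c) =
      (Matrix.of fun r c =>
          Sum.elim (fun q => W1 r q) (Sum.elim (fun a => C r a) (fun a => Uhat r a)) c :
        Matrix (Fin n) ((Fin p ⊕ Fin L) ⊕ (Fin k ⊕ Fin k)) ℂ) *
      Matrix.fromBlocks
        (H + σ • (Matrix.of fun r q => if r = Sum.inl q then (1 : ℂ) else 0))
        (σ • (W1ᴴ * U))
        (Matrix.of fun r q => Sum.elim (fun a => B a q) (fun _ => (0 : ℂ)) r)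
        (Matrix.of fun r c =>
          Sum.elim (fun a => ((1 : Matrix (Fin k) (Fin k) ℂ) + σ • (Cᴴ * U)) a c)
            (fun a => (σ • N) a c) r) := by
  set E : Matrix (Fin p ⊕ Fin L) (Fin p) ℂ :=
    Matrix.of fun r q => if r = Sum.inl q then (1 : ℂ) else 0 with hE
  have hW1E : W1 * E = Wj := by
    ext r q
    simp [hE, Matrix.mul_apply, Fintype.sum_sum_type, hWj]
  have h1 : (Matrix.of fun r c => Sum.elim (fun q => Wj r q) (fun a => U r a) c :
      Matrix (Fin n) (Fin p ⊕ Fin k) ℂ) = Matrix.fromCols Wj U := rfl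
  have h2 : (Matrix.of fun r c =>
      Sum.elim (fun q => W1 r q) (Sum.elim (fun a => C r a) (fun a => Uhat r a)) c :
      Matrix (Fin n) ((Fin p ⊕ Fin L) ⊕ (Fin k ⊕ Fin k)) ℂ) =
      Matrix.fromCols W1 (Matrix.fromCols C Uhat) := rfl
  have h3 : (Matrix.of fun r q => Sum.elim (fun a => B a q) (fun _ => (0 : ℂ)) r :
      Matrix (Fin k ⊕ Fin k) (Fin p) ℂ) = Matrix.fromRows B 0 := by
    ext (a | a) q <;> rfl
  have h4 : (Matrix.of fun r c =>
      Sum.elim (fun a => ((1 : Matrix (Fin k) (Fin k) ℂ) + σ • (Cᴴ * U)) a c)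
        (fun a => (σ • N) a c) r :
      Matrix (Fin k ⊕ Fin k) (Fin k) ℂ) =
      Matrix.fromRows ((1 : Matrix (Fin k) (Fin k) ℂ) + σ • (Cᴴ * U)) (σ • N) := by
    ext (a | a) q <;> rfl
  have hsmul : σ • Matrix.fromCols Wj U = Matrix.fromCols (σ • Wj) (σ • U) := by
    ext r (q | a) <;> rfl
  have hsum : ∀ (X Y : Matrix (Fin n) (Fin p) ℂ) (Z V : Matrix (Fin n) (Fin k) ℂ),
      Matrix.fromCols X Z + Matrix.fromCols Y V =
        Matrix.fromCols (X + Y) (Z + V) := by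
    intro X Y Z V; ext r (q | a) <;> rfl
  rw [h1, h2, h3, h4, Matrix.fromCols_mul_fromBlocks,
    Matrix.fromCols_mul_fromRows, Matrix.fromCols_mul_fromRows,
    Matrix.add_mul, Matrix.smul_mul, Matrix.one_mul, Matrix.mul_fromCols,
    hsmul, hsum, Matrix.fromCols_ext_iff]
  constructor
  · rw [hArnoldi, Matrix.mul_add, Matrix.mul_smul, hW1E, Matrix.mul_zero]
    abel
  · rw [hC, Matrix.mul_add, Matrix.mul_one, Matrix.mul_smul]
    conv_lhs => rw [hQR]
    rw [smul_add, smul_add, Matrix.mul_smul, Matrix.mul_smul]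
    abel
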